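/- Let x ∈ 𝒟_n ∩ ST_n^r, let y ∈ ST_m^s, and let f ∈ Sh^≺(r,s) with f ≠ ε(r,s). If there exist z ∈ 𝒟 and w ∈ ST_l such that f∘(x×y) = z\w, then l < m. -/

import Mathlib

open scoped TensorProduct

namespace SurjPerm

/-- The maximal value of a word (the `r` such that a surjection lands in `{1,…,r}`). -/
def rk (l : List ℕ) : ℕ := l.foldr max 0

/-- `l` is (the list of values of) a surjective map `{1,…,n} → {1,…,r}`
    with `n = l.length ≥ 1` and `r = rk l`. -/
def IsST (l : List ℕ) : Prop := l ≠ [] ∧ ∀ k, k ∈ l ↔ 1 ≤ k ∧ k ≤ rk l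

/-- membership in `ST_n^r`. -/
def memST (l : List ℕ) (n r : ℕ) : Prop := IsST l ∧ l.length = n ∧ rk l = r

/-- concatenation `x × y`. -/
def cat (x y : List ℕ) : List ℕ := x ++ y.map (· + rk x)

/-- iterated concatenation `x¹ × x² × … × xᵖ`. -/
def catAll (l : List (List ℕ)) : List ℕ := l.foldr cat []

/-- standardization of a word. -/
def stdList (l : List ℕ) : List ℕ := l.map fun v => (l.dedup.filter (· ≤ v)).length

/-- corestriction `x|^K`. -/
def corestrict (x : List ℕ) (K : Finset ℕ) : List ℕ := stdList (x.filter (· ∈ K))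

/-- the `i`-th entry of a word, `1`-indexed: `ent f i = f(i)`. -/
def ent (l : List ℕ) (i : ℕ) : ℕ := l.getD (i - 1) 0

/-- composition `f ∘ x` of the map (word) `f` with the map (word) `x`. -/
def wcomp (f x : List ℕ) : List ℕ := x.map fun v => ent f v

/-- the identity permutation `1_n` as a word. -/
def idW (n : ℕ) : List ℕ := (List.range n).map (· + 1)

/-- the permutation `ε(r₁,…,r_p)` as a word: the `i`-th block of positions
    carries the values shifted above all later blocks. -/
def epsW : List ℕ → List ℕ
  | [] => []
  | r :: rs => ((List.range r).map (· + rs.sum + 1)) ++ epsW rs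

/-- `x \ y := ε(r,s) ∘ (x × y)`. -/
def bsl (x y : List ℕ) : List ℕ := wcomp (epsW [rk x, rk y]) (cat x y)

/-- `f` is strictly increasing on each block of the composition `ns`. -/
def blockIncr (ns f : List ℕ) : Prop :=
  ∀ k, k < ns.length → ∀ i j, (ns.take k).sum < i → i < j → j ≤ (ns.take (k + 1)).sum →
    ent f i < ent f j

/-- `(n₁,…,n_p)`-stuffles. -/
def IsStuffle (ns f : List ℕ) : Prop := IsST f ∧ f.length = ns.sum ∧ blockIncr ns f

/-- `(n₁,…,n_p)`-shuffles: stuffles which are permutations. -/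
def IsShuffle (ns f : List ℕ) : Prop := IsStuffle ns f ∧ rk f = ns.sum

/-- irreducible surjections. -/
def Irr (l : List ℕ) : Prop := IsST l ∧ ¬ ∃ g h, IsST g ∧ IsST h ∧ l = cat g h

/-- the set of irreducible surjections of arity `n`. -/
def IrrN (n : ℕ) : Set (List ℕ) := {l | Irr l ∧ l.length = n}

/-- the product `x · y` on surjections. -/
def dotW (x y : List ℕ) : List ℕ :=
  x.map (fun v => if v < rk x then v else rk x + rk y - 1) ++
    y.map (fun v => if v < rk y then v + rk x - 1 else rk x + rk y - 1)

/-- iterated `·` product `x¹ · x² · … · xᵖ`. -/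
def dotAll : List (List ℕ) → List ℕ
  | [] => []
  | a :: as => as.foldl dotW a

/-- indecomposable surjections (for the `·` product). -/
def Indec (l : List ℕ) : Prop := IsST l ∧ ¬ ∃ a b, IsST a ∧ IsST b ∧ l = dotW a b

/-- the set `𝒟`. -/
def inD (x : List ℕ) : Prop :=
  IsST x ∧ ((x = [1] ∨ x = [1, 1]) ∨
    (3 ≤ x.length ∧ Irr x ∧
      ¬ ∃ y z, ∃ _ : y.length < x.length, inD y ∧ IsST z ∧ x = bsl y z))
termination_by x.length
decreasing_by assumption

/-- the set `𝒞`. -/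
def inC (x : List ℕ) : Prop :=
  Irr x ∧
    ((∃ y z, ∃ _ : y.length < x.length, Irr y ∧ ¬ inC y ∧ IsST z ∧ x = bsl y z) ∨
      (∃ a b, IsST a ∧ IsST b ∧ x = dotW a b))
termination_by x.length
decreasing_by assumption

/-- the set `𝔅(l)`, with `𝔅(0) = 𝒟`. -/
def inBfrak (l : ℕ) (x : List ℕ) : Prop :=
  if l = 0 then inD x else ∃ u v, inD u ∧ IsST v ∧ v.length = l ∧ x = bsl u v

/-- `t_i ∘ f`: exchange the values `i` and `i+1`. -/
def swapVal (i : ℕ) (l : List ℕ) : List ℕ :=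
  l.map fun v => if v = i then i + 1 else if v = i + 1 then i else v

/-- covering relation of the weak Bruhat order on `ST_n^r`:
    `f < t_i ∘ f` whenever `f⁻¹(i) < f⁻¹(i+1)`. -/
def wBCov (f g : List ℕ) : Prop :=
  ∃ i, 1 ≤ i ∧ i + 1 ≤ rk f ∧ g = swapVal i f ∧
    ∀ a b, a < f.length → b < f.length → f.getD a 0 = i → f.getD b 0 = i + 1 → a < b

/-- strict weak Bruhat order. -/
def wBlt : List ℕ → List ℕ → Prop := Relation.TransGen wBCov

/-- weak Bruhat order. -/
def wBle : List ℕ → List ℕ → Prop := Relation.ReflTransGen wBCov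

/-- the (0-indexed) positions `j₁-1 < … < j_λ-1` where the maximal value is attained. -/
def maxPos (x : List ℕ) : List ℕ :=
  (List.range x.length).filter fun i => x.getD i 0 = rk x

/-- `λ(x)`. -/
def lam (x : List ℕ) : ℕ := (maxPos x).length

/-- `𝕄(x) = (𝕄(x)_λ, …, 𝕄(x)₁)`. -/
def Mword (x : List ℕ) : List ℕ :=
  (List.zipWith (fun a b => b - a - 1) (maxPos x) ((maxPos x).drop 1) ++
    [x.length - (maxPos x).getLastD 0 - 1]).reverse

/-- the pieces `x|^{1..l₁}, x|^{l₁+1..l₂}, …, x|^{l_p+1..r}`. -/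
def pieces (x : List ℕ) (ls : List ℕ) : List (List ℕ) :=
  ((0 :: ls).zip (ls ++ [rk x])).map fun p => corestrict x (Finset.Icc (p.1 + 1) p.2)

/-- `x^{(l₁,…,l_p)}`. -/
def xfam (x : List ℕ) (ls : List ℕ) : List ℕ := catAll (pieces x ls)

variable (𝕂 : Type) [Field 𝕂]

/-- the vector space `𝕂[ST]` (with basis all words; only the basis elements in `ST` matter). -/
abbrev V := List ℕ →₀ 𝕂

/-- the coproduct `Δ`. -/
noncomputable def Delta : V 𝕂 →ₗ[𝕂] TensorProduct 𝕂 (V 𝕂) (V 𝕂) :=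
  Finsupp.lsum 𝕂 fun x => LinearMap.toSpanSingleton 𝕂 _
    (∑ i ∈ Finset.Ico 1 (rk x),
      Finsupp.single (corestrict x (Finset.Icc 1 i)) (1 : 𝕂) ⊗ₜ[𝕂]
        Finsupp.single (corestrict x (Finset.Icc (i + 1) (rk x))) (1 : 𝕂))

/-- the subspace `𝕂[ST_n]`. -/
noncomputable def STspanN (n : ℕ) : Submodule 𝕂 (V 𝕂) :=
  Submodule.span 𝕂 {v | ∃ l, IsST l ∧ l.length = n ∧ v = Finsupp.single l 1}

/-- `Prim(ST)_n = {v ∈ 𝕂[ST_n] : Δ v = 0}`. -/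
noncomputable def PrimN (n : ℕ) : Submodule 𝕂 (V 𝕂) :=
  STspanN 𝕂 n ⊓ LinearMap.ker (Delta 𝕂)

/-- the projection `E`. -/
noncomputable def Emap : V 𝕂 →ₗ[𝕂] V 𝕂 :=
  Finsupp.lsum 𝕂 fun x => LinearMap.toSpanSingleton 𝕂 _
    (∑ᶠ ls ∈ {ls : List ℕ | ls.Chain' (· < ·) ∧ ∀ l ∈ ls, 0 < l ∧ l < rk x},
      ((-1 : 𝕂) ^ ls.length) • Finsupp.single (xfam x ls) (1 : 𝕂))

/-- generic bilinear-on-basis operation indexed by a set of shuffles. -/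
noncomputable def shOp (P : ℕ → ℕ → List ℕ → Prop) (a b : V 𝕂) : V 𝕂 :=
  Finsupp.sum a fun x cx => Finsupp.sum b fun y cy =>
    (cx * cy) • ∑ᶠ f ∈ {f : List ℕ | IsShuffle [rk x, rk y] f ∧ P (rk x) (rk y) f},
      Finsupp.single (wcomp f (cat x y)) (1 : 𝕂)

/-- the dendriform operation `≻`. -/
noncomputable def succOp : V 𝕂 → V 𝕂 → V 𝕂 :=
  shOp 𝕂 fun r s f => ent f r < ent f (r + s)

/-- the dendriform operation `≺`. -/
noncomputable def precOp : V 𝕂 → V 𝕂 → V 𝕂 :=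
  shOp 𝕂 fun r s f => ent f (r + s) < ent f r

/-- `ω^≺(y₁,…,y_k) = y₁ ≺ (y₂ ≺ (… ≺ y_k))`. -/
noncomputable def omPrec : List (V 𝕂) → V 𝕂
  | [] => 0
  | [a] => a
  | a :: as => precOp 𝕂 a (omPrec as)

/-- `ω^≻(y₁,…,y_k) = ((y₁ ≻ y₂) ≻ …) ≻ y_k`. -/
noncomputable def omSucc : List (V 𝕂) → V 𝕂
  | [] => 0
  | a :: as => as.foldl (succOp 𝕂) a

/-- `ω^≺(l) ≻ x ≺ ω^≻(r)`, empty factors omitted. -/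
noncomputable def mterm (x : V 𝕂) : List (V 𝕂) → List (V 𝕂) → V 𝕂
  | [], [] => x
  | [], r => precOp 𝕂 x (omSucc 𝕂 r)
  | l, [] => succOp 𝕂 (omPrec 𝕂 l) x
  | l, r => precOp 𝕂 (succOp 𝕂 (omPrec 𝕂 l) x) (omSucc 𝕂 r)

/-- the brace operation `M^{ST}_{1k}(x; y₁,…,y_k)`. -/
noncomputable def braceM (x : V 𝕂) (ys : List (V 𝕂)) : V 𝕂 :=
  ∑ j ∈ Finset.range (ys.length + 1),
    ((-1 : 𝕂) ^ (ys.length - j)) • mterm 𝕂 x (ys.take j) (ys.drop j)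

/-- generic bilinear-on-basis operation indexed by a set of stuffles, with `q`-weights
    `q^{s(f) - c}` where `s(f) = |f| - rk f`. -/
noncomputable def stOp (q : 𝕂) (c : ℕ) (P : ℕ → ℕ → List ℕ → Prop) (a b : V 𝕂) : V 𝕂 :=
  Finsupp.sum a fun x cx => Finsupp.sum b fun y cy =>
    (cx * cy) • ∑ᶠ f ∈ {f : List ℕ | IsStuffle [rk x, rk y] f ∧ P (rk x) (rk y) f},
      q ^ (f.length - rk f - c) • Finsupp.single (wcomp f (cat x y)) (1 : 𝕂)

/-- `≻_q`. -/
noncomputable def succQ (q : 𝕂) : V 𝕂 → V 𝕂 → V 𝕂 :=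
  stOp 𝕂 q 0 fun r s f => ent f r < ent f (r + s)

/-- `≺_q`. -/
noncomputable def precQ (q : 𝕂) : V 𝕂 → V 𝕂 → V 𝕂 :=
  stOp 𝕂 q 0 fun r s f => ent f (r + s) < ent f r

/-- `·_q`. -/
noncomputable def dotQ (q : 𝕂) : V 𝕂 → V 𝕂 → V 𝕂 :=
  stOp 𝕂 q 1 fun r s f => ent f r = ent f (r + s)

/-- `≽_q = ≻_q + q ·_q`. -/
noncomputable def succcQ (q : 𝕂) (a b : V 𝕂) : V 𝕂 := succQ 𝕂 q a b + q • dotQ 𝕂 q a b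

/-- `ω^{≺_q}`. -/
noncomputable def omPrecQ (q : 𝕂) : List (V 𝕂) → V 𝕂
  | [] => 0
  | [a] => a
  | a :: as => precQ 𝕂 q a (omPrecQ q as)

/-- `ω^{≽_q}`. -/
noncomputable def omSucccQ (q : 𝕂) : List (V 𝕂) → V 𝕂
  | [] => 0
  | a :: as => as.foldl (succcQ 𝕂 q) a

/-- `ω^{≺_q}(l) ≽_q x ≺_q ω^{≽_q}(r)`, empty factors omitted. -/
noncomputable def mtermQ (q : 𝕂) (x : V 𝕂) : List (V 𝕂) → List (V 𝕂) → V 𝕂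
  | [], [] => x
  | [], r => precQ 𝕂 q x (omSucccQ 𝕂 q r)
  | l, [] => succcQ 𝕂 q (omPrecQ 𝕂 q l) x
  | l, r => precQ 𝕂 q (succcQ 𝕂 q (omPrecQ 𝕂 q l) x) (omSucccQ 𝕂 q r)

/-- the brace operation `M^{ST(q)}_{1k}`. -/
noncomputable def braceMQ (q : 𝕂) (x : V 𝕂) (ys : List (V 𝕂)) : V 𝕂 :=
  ∑ j ∈ Finset.range (ys.length + 1),
    ((-1 : 𝕂) ^ (ys.length - j)) • mtermQ 𝕂 q x (ys.take j) (ys.drop j)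

/-- the shuffle product of two basis elements. -/
noncomputable def shufSingle (x y : List ℕ) : V 𝕂 :=
  ∑ᶠ f ∈ {f : List ℕ | IsShuffle [rk x, rk y] f},
    Finsupp.single (wcomp f (cat x y)) (1 : 𝕂)

/-- the shuffle product `*` on `𝕂[ST]`, as a bilinear map. -/
noncomputable def shufL : V 𝕂 →ₗ[𝕂] V 𝕂 →ₗ[𝕂] V 𝕂 :=
  Finsupp.lsum 𝕂 fun x => LinearMap.toSpanSingleton 𝕂 _
    (Finsupp.lsum 𝕂 fun y => LinearMap.toSpanSingleton 𝕂 _ (shufSingle 𝕂 x y))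

/-- the augmented space `𝕂·1 ⊕ 𝕂[ST]`. -/
abbrev Vp := 𝕂 × V 𝕂

/-- inclusion `𝕂[ST] ↪ 𝕂·1 ⊕ 𝕂[ST]`. -/
noncomputable def inclV : V 𝕂 →ₗ[𝕂] Vp 𝕂 := LinearMap.inr 𝕂 𝕂 (V 𝕂)

/-- the unit `1`. -/
noncomputable def oneVp : Vp 𝕂 := (1, 0)

/-- the unital extension of the shuffle product to `𝕂·1 ⊕ 𝕂[ST]`, as a bilinear map:
    `(a + x)(b + y) = ab + (a y + b x + x * y)`.  In particular `1 * u = u = u * 1`. -/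
noncomputable def mulVp : Vp 𝕂 →ₗ[𝕂] Vp 𝕂 →ₗ[𝕂] Vp 𝕂 :=
  LinearMap.mk₂ 𝕂 (fun u v => (u.1 * v.1, u.1 • v.2 + v.1 • u.2 + shufL 𝕂 u.2 v.2))
    (fun u u' v => by
      refine Prod.ext ?_ ?_ <;>
        simp [add_mul, add_smul, smul_add, map_add, LinearMap.add_apply] <;> abel)
    (fun c u v => by
      refine Prod.ext ?_ ?_ <;>
        simp [mul_assoc, mul_smul, smul_add, smul_comm c v.1] <;> abel)
    (fun u v v' => by
      refine Prod.ext ?_ ?_ <;>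
        simp [mul_add, add_smul, smul_add, map_add, LinearMap.add_apply] <;> abel)
    (fun c u v => by
      refine Prod.ext ?_ ?_ <;>
        simp [mul_left_comm, mul_smul, smul_add, smul_comm c u.1] <;> abel)

/-- the extension `Δ⁺` of `Δ` to `𝕂·1 ⊕ 𝕂[ST]`, with `Δ⁺(1) = 1 ⊗ 1` and
    `Δ⁺(x) = x ⊗ 1 + 1 ⊗ x + Δ(x)` for `x ∈ 𝕂[ST]`. -/
noncomputable def DeltaP : Vp 𝕂 →ₗ[𝕂] TensorProduct 𝕂 (Vp 𝕂) (Vp 𝕂) :=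
  (LinearMap.toSpanSingleton 𝕂 _ (oneVp 𝕂 ⊗ₜ[𝕂] oneVp 𝕂)).comp (LinearMap.fst 𝕂 𝕂 (V 𝕂))
    + (((TensorProduct.mk 𝕂 (Vp 𝕂) (Vp 𝕂)).flip (oneVp 𝕂)).comp (inclV 𝕂)).comp
        (LinearMap.snd 𝕂 𝕂 (V 𝕂))
    + ((TensorProduct.mk 𝕂 (Vp 𝕂) (Vp 𝕂) (oneVp 𝕂)).comp (inclV 𝕂)).comp
        (LinearMap.snd 𝕂 𝕂 (V 𝕂))
    + ((TensorProduct.map (inclV 𝕂) (inclV 𝕂)).comp (Delta 𝕂)).comp (LinearMap.snd 𝕂 𝕂 (V 𝕂))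

/-- componentwise product on the tensor square: `(a⊗b)·(c⊗d) = (a·c)⊗(b·d)`. -/
noncomputable def mulTsq :
    TensorProduct 𝕂 (Vp 𝕂) (Vp 𝕂) →ₗ[𝕂]
      TensorProduct 𝕂 (Vp 𝕂) (Vp 𝕂) →ₗ[𝕂] TensorProduct 𝕂 (Vp 𝕂) (Vp 𝕂) :=
  TensorProduct.lift
    (((TensorProduct.mapBilinear (RingHom.id 𝕂) (Vp 𝕂) (Vp 𝕂) (Vp 𝕂) (Vp 𝕂)).comp (mulVp 𝕂)).compl₂
      (mulVp 𝕂))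

/-- concatenation on the right with a fixed word, linearized: `x ↦ x × y`. -/
noncomputable def catR (y : List ℕ) : V 𝕂 →ₗ[𝕂] V 𝕂 :=
  Finsupp.lsum 𝕂 fun x => LinearMap.toSpanSingleton 𝕂 _ (Finsupp.single (cat x y) (1 : 𝕂))

/-- concatenation on the left with a fixed word, linearized: `y ↦ x × y`. -/
noncomputable def catL (x : List ℕ) : V 𝕂 →ₗ[𝕂] V 𝕂 :=
  Finsupp.lsum 𝕂 fun y => LinearMap.toSpanSingleton 𝕂 _ (Finsupp.single (cat x y) (1 : 𝕂))

/-- `Sh^•(r₁,…,r_p)`: surjections onto `{1,…,R-p+1}` (where `R = r₁+…+r_p`), strictly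
    increasing on each block, attaining the maximal value exactly at the block ends, and whose
    corestriction to `{1,…,R-p}` is a `(r₁-1,…,r_p-1)`-shuffle. -/
def ShBull (rs : List ℕ) (f : List ℕ) : Prop :=
  memST f rs.sum (rs.sum - rs.length + 1) ∧ blockIncr rs f ∧
    (∀ i, 1 ≤ i → i ≤ rs.sum →
      (ent f i = rs.sum - rs.length + 1 ↔ ∃ k, k < rs.length ∧ i = (rs.take (k + 1)).sum)) ∧
    IsShuffle (rs.map (· - 1)) (corestrict f (Finset.Icc 1 (rs.sum - rs.length)))

/-! ### Auxiliary lemmas for Statement 15 -/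

lemma rk_cons (a : ℕ) (t : List ℕ) : rk (a :: t) = max a (rk t) := rfl

lemma mem_le_rk {k : ℕ} {l : List ℕ} (h : k ∈ l) : k ≤ rk l := by
  induction l with
  | nil => simp at h
  | cons a t ih =>
    rw [rk_cons]
    rcases List.mem_cons.mp h with h | h
    · omega
    · have := ih h; omega

lemma rk_le {l : List ℕ} {c : ℕ} (h : ∀ k ∈ l, k ≤ c) : rk l ≤ c := by
  induction l with
  | nil => simp [rk]
  | cons a t ih =>
    rw [rk_cons]
    have h1 := h a List.mem_cons_self
    have h2 := ih fun k hk => h k (List.mem_cons_of_mem a hk)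
    omega

lemma epsW_pair (a b : ℕ) :
    epsW [a, b] = ((List.range a).map fun i => i + b + 1) ++ (List.range b).map (· + 1) := by
  simp [epsW]

lemma epsW_pair_length (a b : ℕ) : (epsW [a, b]).length = a + b := by
  simp [epsW_pair]

lemma ent_epsW_left {a b v : ℕ} (h1 : 1 ≤ v) (h2 : v ≤ a) :
    ent (epsW [a, b]) v = b + v := by
  have hlt : v - 1 < ((List.range a).map fun i => i + b + 1).length := by simp; omega
  unfold ent
  rw [epsW_pair, List.getD_append _ _ _ _ hlt, List.getD_eq_getElem _ 0 hlt,
    List.getElem_map]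
  simp; omega

lemma ent_epsW_right {a b v : ℕ} (h2 : a < v) (h3 : v ≤ a + b) :
    ent (epsW [a, b]) v = v - a := by
  have hge : ((List.range a).map fun i => i + b + 1).length ≤ v - 1 := by simp; omega
  have hlt : v - 1 - a < ((List.range b).map (· + 1)).length := by simp; omega
  unfold ent
  rw [epsW_pair, List.getD_append_right _ _ _ _ hge]
  rw [List.getD_eq_getElem _ 0 (by simpa using hlt)]
  simp; omega

lemma chain_le {F : ℕ → ℕ} {lo hi : ℕ}
    (h : ∀ i j, lo ≤ i → i < j → j ≤ hi → F i < F j) :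
    ∀ i j, lo ≤ i → i ≤ j → j ≤ hi → F i + (j - i) ≤ F j := by
  intro i j h1 h2 h3
  induction j, h2 using Nat.le_induction with
  | base => simp
  | succ j hj ih =>
    have hlt : F j < F (j + 1) := h j (j + 1) (le_trans h1 hj) (by omega) h3
    have := ih (by omega)
    omega

/-- if `x ∈ 𝒟`, `f ∈ Sh^≺(r,s)`, `f ≠ ε(r,s)` and `f∘(x×y) = z\w` with
`z ∈ 𝒟` and `w ∈ ST_l`, then `l < m`. -/
theorem statement_15 (x y f z w : List ℕ) (n r m s l : ℕ)
    (hxD : inD x) (hx : memST x n r) (hy : memST y m s)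
    (hf : IsShuffle [r, s] f) (hfp : ent f (r + s) < ent f r) (hfe : f ≠ epsW [r, s])
    (hz : inD z) (hw : IsST w) (hwl : w.length = l)
    (heq : wcomp f (cat x y) = bsl z w) :
    l < m := by
  obtain ⟨hxS, hxn, hxr⟩ := hx
  obtain ⟨hyS, hym, hys⟩ := hy
  obtain ⟨⟨hfS, hflen, hfbi⟩, hfrk⟩ := hf
  have hzS : IsST z := by have hz' := hz; rw [inD] at hz'; exact hz'.1
  have hflen' : f.length = r + s := by simpa using hflen
  have hfrk' : rk f = r + s := by simpa using hfrk
  -- generic facts about IsST lists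
  have entry_bound : ∀ L : List ℕ, IsST L → ∀ p, p < L.length →
      1 ≤ L.getD p 0 ∧ L.getD p 0 ≤ rk L := by
    intro L hL p hp
    have hm : L.getD p 0 ∈ L := by
      rw [List.getD_eq_getElem L 0 hp]; exact List.getElem_mem hp
    exact (hL.2 _).1 hm
  have surj : ∀ L : List ℕ, IsST L → ∀ v, 1 ≤ v → v ≤ rk L →
      ∃ p, p < L.length ∧ L.getD p 0 = v := by
    intro L hL v h1 h2
    obtain ⟨p, hp, he⟩ := List.mem_iff_getElem.mp ((hL.2 v).2 ⟨h1, h2⟩)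
    exact ⟨p, hp, by rw [List.getD_eq_getElem L 0 hp]; exact he⟩
  have rk_pos : ∀ L : List ℕ, IsST L → 1 ≤ rk L := by
    intro L hL
    obtain ⟨k, hk⟩ := List.exists_mem_of_ne_nil L hL.1
    have := (hL.2 k).1 hk; omega
  have hr1 : 1 ≤ r := hxr ▸ rk_pos x hxS
  have hs1 : 1 ≤ s := hys ▸ rk_pos y hyS
  have hb1 : 1 ≤ rk w := rk_pos w hw
  have ha1 : 1 ≤ rk z := rk_pos z hzS
  have hnz1 : 1 ≤ z.length := List.length_pos_iff.mpr hzS.1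
  have hl1 : 1 ≤ l := hwl ▸ List.length_pos_iff.mpr hw.1
  -- lengths
  have hlen : n + m = z.length + l := by
    have := congrArg List.length heq
    simp only [wcomp, cat, bsl, List.length_map, List.length_append] at this
    omega
  -- entry formulas for the left side
  have lhsL : ∀ p, p < n → (wcomp f (cat x y)).getD p 0 = ent f (x.getD p 0) := by
    intro p hp
    have hp' : p < x.length := by omega
    have hpc : p < (cat x y).length := by
      simp only [cat, List.length_append, List.length_map]; omega
    simp only [wcomp]
    rw [List.getD_eq_getElem _ 0 (by simpa using hpc), List.getElem_map]
    congr 1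
    simp only [cat]
    rw [List.getElem_append_left hp', List.getD_eq_getElem x 0 hp']
  have lhsR : ∀ q, q < m → (wcomp f (cat x y)).getD (n + q) 0
      = ent f (y.getD q 0 + r) := by
    intro q hq
    have hq' : q < y.length := by omega
    have hpc : n + q < (cat x y).length := by
      simp only [cat, List.length_append, List.length_map]; omega
    simp only [wcomp]
    rw [List.getD_eq_getElem _ 0 (by simpa using hpc), List.getElem_map]
    congr 1
    simp only [cat]
    rw [List.getElem_append_right (by omega : x.length ≤ n + q)]
    rw [List.getElem_map, ← List.getD_eq_getElem y 0]
    rw [show n + q - x.length = q by omega, hxr]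
  -- entry formulas for the right side
  have bslL : ∀ u : List ℕ, IsST u → ∀ p, p < z.length →
      (bsl z u).getD p 0 = rk u + z.getD p 0 := by
    intro u hu p hp
    have hpc : p < (cat z u).length := by
      simp only [cat, List.length_append, List.length_map]; omega
    simp only [bsl, wcomp]
    rw [List.getD_eq_getElem _ 0 (by simpa using hpc), List.getElem_map]
    have hcv : (cat z u)[p] = z.getD p 0 := by
      simp only [cat]
      rw [List.getElem_append_left hp, List.getD_eq_getElem z 0 hp]
    rw [hcv]
    exact ent_epsW_left (entry_bound z hzS p hp).1 (entry_bound z hzS p hp).2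
  have bslR : ∀ u : List ℕ, IsST u → ∀ q, q < u.length →
      (bsl z u).getD (z.length + q) 0 = u.getD q 0 := by
    intro u hu q hq'
    have hpc : z.length + q < (cat z u).length := by
      simp only [cat, List.length_append, List.length_map]; omega
    simp only [bsl, wcomp]
    rw [List.getD_eq_getElem _ 0 (by simpa using hpc), List.getElem_map]
    have hcv : (cat z u)[z.length + q] = u.getD q 0 + rk z := by
      simp only [cat]
      rw [List.getElem_append_right (by omega : z.length ≤ z.length + q)]
      rw [List.getElem_map, ← List.getD_eq_getElem u 0]
      rw [show z.length + q - z.length = q by omega]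
    rw [hcv]
    have hub := entry_bound u hu q hq'
    rw [ent_epsW_right (by omega) (by omega)]
    omega
  have rhsL : ∀ p, p < z.length → (bsl z w).getD p 0 = rk w + z.getD p 0 := bslL w hw
  have rhsR : ∀ q, q < l → (bsl z w).getD (z.length + q) 0 = w.getD q 0 :=
    fun q hq => bslR w hw q (by omega)
  have eqAt : ∀ p, (wcomp f (cat x y)).getD p 0 = (bsl z w).getD p 0 := by
    intro p; rw [heq]
  -- block monotonicity of f
  have mono1 : ∀ i j, 1 ≤ i → i < j → j ≤ r → ent f i < ent f j := by
    intro i j h1 h2 h3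
    have h := hfbi 0 (by norm_num) i j
    simp only [List.take, List.sum_cons, List.sum_nil] at h
    exact h (by omega) h2 (by omega)
  have mono2 : ∀ i j, r < i → i < j → j ≤ r + s → ent f i < ent f j := by
    intro i j h1 h2 h3
    have h := hfbi 1 (by norm_num) i j
    simp only [List.take, List.sum_cons, List.sum_nil] at h
    exact h (by omega) h2 (by omega)
  have chain1 := chain_le (F := ent f) (lo := 1) (hi := r) mono1
  have chain2 := chain_le (F := ent f) (lo := r + 1) (hi := r + s)
    (fun i j h1 h2 h3 => mono2 i j (by omega) h2 h3)
  have entb : ∀ v, 1 ≤ v → v ≤ r + s → 1 ≤ ent f v ∧ ent f v ≤ r + s := by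
    intro v h1 h2
    have := entry_bound f hfS (v - 1) (by omega)
    rw [hfrk'] at this
    exact this
  have appear : ∀ u, 1 ≤ u → u ≤ r + s → ∃ v, 1 ≤ v ∧ v ≤ r + s ∧ ent f v = u := by
    intro u h1 h2
    obtain ⟨p, hp, he⟩ := surj f hfS u h1 (by omega)
    refine ⟨p + 1, by omega, by omega, ?_⟩
    simpa [ent] using he
  -- rule out l ≥ m
  rcases Nat.lt_or_ge l m with hlm | hlm
  · exact hlm
  exfalso
  have hnzn : z.length ≤ n := by omega
  -- the three basic consequences of the equality
  have F1 : ∀ p, p < z.length → ent f (x.getD p 0) = rk w + z.getD p 0 := by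
    intro p hp
    rw [← lhsL p (by omega), eqAt p, rhsL p hp]
  have F2 : ∀ p, z.length ≤ p → p < n → ent f (x.getD p 0) = w.getD (p - z.length) 0 := by
    intro p hp1 hp2
    have := rhsR (p - z.length) (by omega)
    rw [show z.length + (p - z.length) = p by omega] at this
    rw [← lhsL p hp2, eqAt p, this]
  have G2 : ∀ v, r < v → v ≤ r + s → ent f v ≤ rk w := by
    intro v h1 h2
    obtain ⟨q, hq, hqe⟩ := surj y hyS (v - r) (by omega) (by rw [hys]; omega)
    have hq' : q < m := by omega
    have e1 := lhsR q hq'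
    have e2 := rhsR (n + q - z.length) (by omega)
    rw [show z.length + (n + q - z.length) = n + q by omega] at e2
    have hwb := entry_bound w hw (n + q - z.length) (by omega)
    rw [eqAt (n + q), e2] at e1
    rw [show y.getD q 0 + r = v by omega] at e1
    omega
  rcases Nat.eq_or_lt_of_le hlm with hlm' | hlm'
  · -- case l = m : show f = epsW [r, s]
    have hnzeq : z.length = n := by omega
    have bigAll : ∀ v, 1 ≤ v → v ≤ r → rk w + 1 ≤ ent f v := by
      intro v h1 h2
      obtain ⟨p, hp, he⟩ := surj x hxS v h1 (by rw [hxr]; omega)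
      have := F1 p (by omega)
      have hzb := entry_bound z hzS p (by omega)
      rw [he] at this; omega
    have hsb : s = rk w := by
      have c2 := chain2 (r + 1) (r + s) (le_refl _) (by omega) (le_refl _)
      have c1 := chain1 1 r (le_refl _) (by omega) (le_refl _)
      have := G2 (r + s) (by omega) (le_refl _)
      have := bigAll 1 (le_refl _) hr1
      have := entb (r + 1) (by omega) (by omega)
      have := entb r (by omega) (by omega)
      omega
    have val1 : ∀ v, 1 ≤ v → v ≤ r → ent f v = s + v := by
      intro v h1 h2
      have c1 := chain1 1 v (le_refl _) h1 h2
      have c2 := chain1 v r h1 h2 (le_refl _)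
      have := bigAll 1 (le_refl _) hr1
      have := entb r (by omega) (by omega)
      omega
    have val2 : ∀ v, r < v → v ≤ r + s → ent f v = v - r := by
      intro v h1 h2
      have c1 := chain2 (r + 1) v (le_refl _) (by omega) h2
      have c2 := chain2 v (r + s) (by omega) h2 (le_refl _)
      have := G2 (r + s) (by omega) (le_refl _)
      have := entb (r + 1) (by omega) (by omega)
      omega
    apply hfe
    apply List.ext_getElem (by rw [hflen', epsW_pair_length])
    intro p h1 h2
    have hp : p < r + s := by omega
    have hfp' : f[p] = ent f (p + 1) := by
      simp only [ent, Nat.add_sub_cancel]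
      rw [List.getD_eq_getElem f 0 h1]
    have hep' : (epsW [r, s])[p] = ent (epsW [r, s]) (p + 1) := by
      simp only [ent, Nat.add_sub_cancel]
      rw [List.getD_eq_getElem _ 0 h2]
    rw [hfp', hep']
    rcases Nat.lt_or_ge p r with hpr | hpr
    · rw [val1 (p + 1) (by omega) (by omega), ent_epsW_left (by omega) (by omega)]
    · rw [val2 (p + 1) (by omega) (by omega), ent_epsW_right (by omega) (by omega)]
  · -- case l > m
    have hnzlt : z.length < n := by omega
    have xb : ∀ p, p < n → 1 ≤ x.getD p 0 ∧ x.getD p 0 ≤ r := by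
      intro p hp
      have := entry_bound x hxS p (by omega)
      rw [hxr] at this; exact this
    have BigPre : ∀ p, p < z.length → rk w + 1 ≤ ent f (x.getD p 0) := by
      intro p hp
      have := F1 p hp
      have hzb := entry_bound z hzS p hp
      omega
    have SufSmall : ∀ p, z.length ≤ p → p < n → ent f (x.getD p 0) ≤ rk w := by
      intro p hp1 hp2
      have := F2 p hp1 hp2
      have hwb := entry_bound w hw (p - z.length) (by omega)
      omega
    have upclosed : ∀ v v', 1 ≤ v → v ≤ v' → v' ≤ r →
        rk w + 1 ≤ ent f v → rk w + 1 ≤ ent f v' := by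
      intro v v' h1 h2 h3 h4
      rcases Nat.eq_or_lt_of_le h2 with h | h
      · rwa [← h]
      · have := mono1 v v' h1 h h3; omega
    have hex : ∃ v, 1 ≤ v ∧ v ≤ r ∧ rk w + 1 ≤ ent f v := by
      refine ⟨x.getD 0 0, (xb 0 (by omega)).1, (xb 0 (by omega)).2, ?_⟩
      exact BigPre 0 (by omega)
    classical
    obtain ⟨v0, hspec, hmin⟩ :
        ∃ v0, (1 ≤ v0 ∧ v0 ≤ r ∧ rk w + 1 ≤ ent f v0) ∧
          ∀ v, v < v0 → ¬(1 ≤ v ∧ v ≤ r ∧ rk w + 1 ≤ ent f v) :=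
      ⟨Nat.find hex, Nat.find_spec hex, fun v hv => Nat.find_min hex hv⟩
    obtain ⟨hv01, hv0r, hv0big⟩ := hspec
    have BigIff : ∀ v, 1 ≤ v → v ≤ r → (rk w + 1 ≤ ent f v ↔ v0 ≤ v) := by
      intro v h1 h2
      constructor
      · intro hb
        by_contra hc
        exact hmin v (by omega) ⟨h1, h2, hb⟩
      · intro hv; exact upclosed v0 v hv01 hv h2 hv0big
    -- v0 ≥ 2
    have hv02 : 2 ≤ v0 := by
      have hsm := SufSmall z.length (le_refl _) hnzlt
      have hxb := xb z.length hnzlt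
      have hbig := (BigIff _ hxb.1 hxb.2).mpr
      by_contra hc
      have := hbig (by omega)
      omega
    -- cardinality: the values above rk w all live on [v0, r]
    have hcard : r + s - rk w ≤ r + 1 - v0 := by
      set g : ℕ → ℕ := fun u =>
        if h : ∃ v, v0 ≤ v ∧ v ≤ r ∧ ent f v = u then h.choose else 0 with hg
      have hgspec : ∀ u, rk w + 1 ≤ u → u ≤ r + s →
          v0 ≤ g u ∧ g u ≤ r ∧ ent f (g u) = u := by
        intro u h1 h2
        have hex' : ∃ v, v0 ≤ v ∧ v ≤ r ∧ ent f v = u := by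
          obtain ⟨v, hv1, hv2, hve⟩ := appear u (by omega) h2
          have hvr : v ≤ r := by
            by_contra hc
            have := G2 v (by omega) hv2
            omega
          exact ⟨v, (BigIff v hv1 hvr).mp (by omega), hvr, hve⟩
        simp only [hg, dif_pos hex']
        exact hex'.choose_spec
      have hmaps : ∀ u ∈ Finset.Icc (rk w + 1) (r + s), g u ∈ Finset.Icc v0 r := by
        intro u hu
        simp only [Finset.mem_Icc] at hu ⊢
        have := hgspec u hu.1 hu.2
        exact ⟨this.1, this.2.1⟩
      have hinj : Set.InjOn g (Finset.Icc (rk w + 1) (r + s)) := by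
        intro u1 hu1 u2 hu2 he
        simp only [Finset.coe_Icc, Set.mem_Icc] at hu1 hu2
        have s1 := hgspec u1 hu1.1 hu1.2
        have s2 := hgspec u2 hu2.1 hu2.2
        rw [← s1.2.2, ← s2.2.2, he]
      have := Finset.card_le_card_of_injOn g hmaps hinj
      rw [Nat.card_Icc, Nat.card_Icc] at this
      omega
    have valS : ∀ v, v0 ≤ v → v ≤ r → ent f v = rk w + (v + 1 - v0) := by
      intro v h1 h2
      have c1 := chain1 v0 v hv01 h1 h2
      have c2 := chain1 v r (by omega) h2 (le_refl _)
      have e1 := entb r (by omega) (by omega)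
      have e2 := entb v0 (by omega) (by omega)
      have e3 := hv0big
      have e4 := hcard
      have e5 := hv0r
      omega
    have zval : ∀ p, p < z.length → x.getD p 0 = z.getD p 0 + v0 - 1 := by
      intro p hp
      have hF := F1 p hp
      have hxb := xb p (by omega)
      have hzb := entry_bound z hzS p hp
      have hbig : v0 ≤ x.getD p 0 := (BigIff _ hxb.1 hxb.2).mp (by omega)
      have := valS _ hbig hxb.2
      omega
    have sufval : ∀ p, z.length ≤ p → p < n → x.getD p 0 ≤ v0 - 1 := by
      intro p hp1 hp2
      have hsm := SufSmall p hp1 hp2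
      have hxb := xb p hp2
      have hbig := (BigIff _ hxb.1 hxb.2).mpr
      by_contra hc
      have := hbig (by omega)
      omega
    -- the suffix word
    have hvlen : (x.drop z.length).length = n - z.length := by simp; omega
    have ventry : ∀ q, q < n - z.length →
        (x.drop z.length).getD q 0 = x.getD (z.length + q) 0 := by
      intro q hq
      have h1 : q < (x.drop z.length).length := by omega
      have h2 : z.length + q < x.length := by omega
      rw [List.getD_eq_getElem _ 0 h1, List.getD_eq_getElem x 0 h2]
      rw [List.getElem_drop]
    have vmem : ∀ k, k ∈ x.drop z.length ↔
        ∃ q, q < n - z.length ∧ x.getD (z.length + q) 0 = k := by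
      intro k
      rw [List.mem_iff_getElem]
      constructor
      · rintro ⟨q, hq, he⟩
        refine ⟨q, by omega, ?_⟩
        rw [← ventry q (by omega), List.getD_eq_getElem _ 0 hq, he]
      · rintro ⟨q, hq, he⟩
        refine ⟨q, by omega, ?_⟩
        rw [← List.getD_eq_getElem _ 0 (by omega), ventry q hq, he]
    have rkv : rk (x.drop z.length) = v0 - 1 := by
      have hle : rk (x.drop z.length) ≤ v0 - 1 := by
        apply rk_le
        intro k hk
        obtain ⟨q, hq, he⟩ := (vmem k).mp hk
        have := sufval (z.length + q) (by omega) (by omega)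
        omega
      have hmem : v0 - 1 ∈ x.drop z.length := by
        obtain ⟨p, hp, he⟩ := surj x hxS (v0 - 1) (by omega) (by rw [hxr]; omega)
        have hpz : z.length ≤ p := by
          by_contra hc
          have hb' := BigPre p (by omega)
          rw [he] at hb'
          exact hmin (v0 - 1) (by omega) ⟨by omega, by omega, hb'⟩
        exact (vmem (v0 - 1)).mpr ⟨p - z.length, by omega,
          by rw [show z.length + (p - z.length) = p by omega]; exact he⟩
      have := mem_le_rk hmem
      omega
    have hvS : IsST (x.drop z.length) := by
      constructor
      · intro hc
        have := congrArg List.length hc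
        simp only [List.length_nil] at this
        omega
      · intro k
        constructor
        · intro hk
          obtain ⟨q, hq, he⟩ := (vmem k).mp hk
          have := xb (z.length + q) (by omega)
          exact ⟨by omega, mem_le_rk hk⟩
        · rintro ⟨h1, h2⟩
          rw [rkv] at h2
          obtain ⟨p, hp, he⟩ := surj x hxS k h1 (by rw [hxr]; omega)
          have hpz : z.length ≤ p := by
            by_contra hc
            have hb' := BigPre p (by omega)
            rw [he] at hb'
            exact hmin k (by omega) ⟨h1, by omega, hb'⟩
          exact (vmem k).mpr ⟨p - z.length, by omega,
            by rw [show z.length + (p - z.length) = p by omega]; exact he⟩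
    have hxeq : x = bsl z (x.drop z.length) := by
      have hblen : x.length = (bsl z (x.drop z.length)).length := by
        simp only [bsl, wcomp, cat, List.length_map, List.length_append]
        omega
      apply List.ext_getElem hblen
      intro p h1 h2
      rw [← List.getD_eq_getElem x 0 h1, ← List.getD_eq_getElem _ 0 h2]
      rcases Nat.lt_or_ge p z.length with hpz | hpz
      · rw [bslL _ hvS p hpz, rkv]
        have := zval p hpz
        have := entry_bound z hzS p hpz
        omega
      · have hb := bslR _ hvS (p - z.length) (by rw [hvlen]; omega)
        rw [show z.length + (p - z.length) = p by omega] at hb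
        rw [hb, ventry (p - z.length) (by omega),
          show z.length + (p - z.length) = p by omega]
    -- contradiction with x ∈ 𝒟
    rw [inD] at hxD
    obtain ⟨-, hcases⟩ := hxD
    rcases hcases with (h1 | h1) | ⟨h3, hirr, hno⟩
    · have := congrArg List.length h1
      simp only [List.length_cons, List.length_nil] at this
      omega
    · have hz1 : z.length = 1 := by
        have := congrArg List.length h1
        simp only [List.length_cons, List.length_nil] at this
        omega
      have e0 : x.getD 0 0 = 1 := by rw [h1]; rfl
      have e1 : x.getD z.length 0 = 1 := by rw [h1, hz1]; rfl
      have hbp := BigPre 0 (by omega)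
      have hss := SufSmall z.length (le_refl _) hnzlt
      rw [e0] at hbp
      rw [e1] at hss
      omega
    · exact hno ⟨z, x.drop z.length, by omega, hz, hvS, hxeq⟩


end SurjPerm
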